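/- Let β ≥ 1, α < 2β + 1 with α ≠ 1, and λ ≠ 0. For x > 0, the function G(x) = (1/λ)·x^{1−α}/(1−α) − (1/2)·λ x^{2β−α+1}/(2β−α+1) · ∑_{n=0}^∞ [ ((1)_n (d)_n) / ((d+1)_n (3/2)_n (2)_n) ] (−λ²x^{2β}/4)ⁿ/n!, where d = −α/(2β) + 1/(2β) + 1, satisfies G'(x) = cos(λx^β)/(λx^α). -/

import Mathlib

noncomputable def poch (a : ℝ) (n : ℕ) : ℝ := ∏ i ∈ Finset.range n, (a + (i : ℝ))

lemma poch_succ' (a : ℝ) (n : ℕ) : poch a (n+1) = poch a n * (a + n) := by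
  simp [poch, Finset.prod_range_succ]

lemma poch_pos {a : ℝ} (ha : 0 < a) (n : ℕ) : 0 < poch a n :=
  Finset.prod_pos fun i _ => by positivity

lemma poch_one (n : ℕ) : poch 1 n = (n.factorial : ℝ) := by
  induction n with
  | zero => simp [poch]
  | succ n ih => rw [poch_succ', ih, Nat.factorial_succ]; push_cast; ring

lemma poch_two (n : ℕ) : poch 2 n = ((n+1).factorial : ℝ) := by
  induction n with
  | zero => simp [poch]
  | succ n ih =>
      rw [poch_succ', ih]
      rw [show n+1+1 = (n+1)+1 from rfl, Nat.factorial_succ (n+1)]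
      push_cast; ring

lemma poch_half (n : ℕ) : poch (3/2) n * (4^n * ((n.factorial : ℕ) : ℝ)) = ((2*n+1).factorial : ℝ) := by
  induction n with
  | zero => simp [poch]
  | succ n ih =>
      rw [poch_succ']
      have h1 : (2*(n+1)+1).factorial = (2*n+3) * ((2*n+2) * (2*n+1).factorial) := by
        rw [show 2*(n+1)+1 = (2*n+2)+1 by ring, Nat.factorial_succ,
          show 2*n+2 = (2*n+1)+1 by ring, Nat.factorial_succ]
      rw [h1, Nat.factorial_succ, pow_succ]
      push_cast
      push_cast at ih
      linear_combination ((3/2+(n:ℝ))*4*((n:ℝ)+1)) * ih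

lemma poch_shift (a : ℝ) (n : ℕ) : poch (a+1) n * a = poch a n * (a + n) := by
  induction n with
  | zero => simp [poch]
  | succ n ih =>
      rw [poch_succ', poch_succ']
      push_cast
      linear_combination (a + 1 + (n:ℝ)) * ih

set_option maxHeartbeats 1000000 in
theorem stmt_11 (β α l : ℝ) (hβ : 1 ≤ β) (hα : α < 2 * β + 1) (hα1 : α ≠ 1)
    (hl : l ≠ 0) (d : ℝ) (hd : d = -α / (2 * β) + 1 / (2 * β) + 1)
    (x : ℝ) (hx : 0 < x) :
    HasDerivAt (fun y : ℝ => (1 / l) * y ^ (1 - α) / (1 - α) -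
        (1 / 2) * (l * y ^ (2 * β - α + 1)) / (2 * β - α + 1) *
          ∑' n : ℕ, poch 1 n * poch d n /
            (poch (d + 1) n * poch (3/2) n * poch 2 n) *
            (-(l ^ 2 * y ^ (2 * β)) / 4) ^ n / (n.factorial : ℝ))
      (Real.cos (l * x ^ β) / (l * x ^ α)) x := by
  have hβ0 : (0:ℝ) < β := lt_of_lt_of_le one_pos hβ
  have hw : (0:ℝ) < 2*β := by linarith
  have he : (0:ℝ) < 2*β - α + 1 := by linarith
  have h1α : (1:ℝ) - α ≠ 0 := sub_ne_zero.mpr (Ne.symm hα1)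
  have hal : (0:ℝ) < |l| := abs_pos.mpr hl
  have hd' : d = (2*β - α + 1)/(2*β) := by rw [hd]; field_simp; ring
  have hd0 : 0 < d := hd' ▸ div_pos he hw
  have hdn : ∀ n : ℕ, (0:ℝ) < d + n := fun n => by positivity
  have hden : ∀ k : ℕ, (2*β*(k:ℝ) + 1 - α) ≠ 0 := by
    intro k
    cases k with
    | zero => simpa using h1α
    | succ m =>
        refine ne_of_gt ?_
        have h0 : (0:ℝ) ≤ (m:ℝ) := Nat.cast_nonneg m
        push_cast
        nlinarith
  set b : ℕ → ℝ := fun k =>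
    (-1)^k * l^(2*k) / (l * (((2*k).factorial : ℕ) : ℝ) * (2*β*(k:ℝ) + 1 - α)) with hbdef
  -- value of b k times its denominator factor
  have hbval : ∀ k : ℕ, b k * (2*β*(k:ℝ)+1-α) = (-1)^k * l^(2*k) / (l * (((2*k).factorial : ℕ) : ℝ)) := by
    intro k
    have hf : (((2*k).factorial : ℕ) : ℝ) ≠ 0 := Nat.cast_ne_zero.mpr (Nat.factorial_ne_zero _)
    have hD := hden k
    rw [hbdef]
    field_simp
  -- splitting powers
  have hsplit : ∀ (y : ℝ), 0 < y → ∀ k : ℕ,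
      y ^ (2*β*(k:ℝ)+1-α) = y ^ ((1:ℝ)-α) * (y ^ (2*β))^k := by
    intro y hy k
    rw [← Real.rpow_natCast (y ^ (2*β)) k, ← Real.rpow_mul hy.le, ← Real.rpow_add hy]
    congr 1
    ring
  have hsplit' : ∀ (y : ℝ), 0 < y → ∀ k : ℕ,
      y ^ (2*β*(k:ℝ)-α) = y ^ (-α) * (y ^ (2*β))^k := by
    intro y hy k
    rw [← Real.rpow_natCast (y ^ (2*β)) k, ← Real.rpow_mul hy.le, ← Real.rpow_add hy]
    congr 1
    ring
  -- absolute value of b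
  have habs : ∀ k : ℕ, |b k| =
      l^(2*k) / (|l| * (((2*k).factorial : ℕ) : ℝ) * |2*β*(k:ℝ)+1-α|) := by
    intro k
    rw [hbdef]
    rw [abs_div, abs_mul, abs_mul, abs_mul, abs_pow, abs_neg, abs_one, one_pow, one_mul,
      Nat.abs_cast, abs_pow, pow_mul, sq_abs, ← pow_mul]
  set K : ℝ := 1/|1-α| + 1/(2*β - α + 1) with hK
  have hK0 : 0 < K := by
    have : (0:ℝ) < |1-α| := abs_pos.mpr h1α
    positivity
  have hinvden : ∀ k : ℕ, 1/|2*β*(k:ℝ)+1-α| ≤ K := by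
    intro k
    cases k with
    | zero =>
        have h2 : (0:ℝ) < 1/(2*β-α+1) := by positivity
        have e0 : 2*β*((0:ℕ):ℝ)+1-α = 1-α := by norm_num
        rw [e0]
        exact le_add_of_nonneg_right h2.le
    | succ m =>
        have h0 : (0:ℝ) ≤ (m:ℝ) := Nat.cast_nonneg m
        have h2 : (2*β-α+1) ≤ 2*β*(((m+1:ℕ)):ℝ)+1-α := by push_cast; nlinarith
        have h3 : (0:ℝ) < 2*β*(((m+1:ℕ)):ℝ)+1-α := lt_of_lt_of_le he h2
        rw [abs_of_pos h3]
        have : (0:ℝ) < 1/|1-α| := by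
          have : (0:ℝ) < |1-α| := abs_pos.mpr h1α
          positivity
        calc 1/(2*β*(((m+1:ℕ)):ℝ)+1-α) ≤ 1/(2*β-α+1) := one_div_le_one_div_of_le he h2
          _ ≤ K := le_add_of_nonneg_left this.le
  -- summability of the series itself at every positive point
  have hsum : ∀ y : ℝ, 0 < y → Summable (fun k => b k * y ^ (2*β*(k:ℝ)+1-α)) := by
    intro y hy
    have hmaj : Summable (fun k : ℕ => (y^((1:ℝ)-α) * K / |l|) * ((l^2 * y^(2*β))^k / (k.factorial : ℝ))) :=
      (Real.summable_pow_div_factorial (l^2*y^(2*β))).mul_left _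
    refine Summable.of_norm_bounded hmaj ?_
    intro k
    have hfack : (k.factorial : ℝ) ≤ (((2*k).factorial : ℕ) : ℝ) :=
      Nat.cast_le.mpr (Nat.factorial_le (by omega))
    have hfk0 : (0:ℝ) < (k.factorial : ℝ) := by exact_mod_cast Nat.factorial_pos k
    have hf2k0 : (0:ℝ) < (((2*k).factorial : ℕ) : ℝ) := by exact_mod_cast Nat.factorial_pos (2*k)
    have hl2k : (0:ℝ) ≤ l^(2*k) := by rw [pow_mul]; positivity
    have hZ : (0:ℝ) ≤ (y^(2*β))^k := by positivity
    have hB : (0:ℝ) < y ^ ((1:ℝ)-α) := Real.rpow_pos_of_pos hy _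
    have hD : (0:ℝ) < |2*β*(k:ℝ)+1-α| := abs_pos.mpr (hden k)
    have hcore : 1/((((2*k).factorial : ℕ) : ℝ) * |2*β*(k:ℝ)+1-α|) ≤ K / (k.factorial : ℝ) := by
      have h3 : 1/(((2*k).factorial : ℕ) : ℝ) ≤ 1/(k.factorial : ℝ) :=
        one_div_le_one_div_of_le hfk0 hfack
      calc 1/((((2*k).factorial : ℕ) : ℝ) * |2*β*(k:ℝ)+1-α|)
          = (1/(((2*k).factorial : ℕ) : ℝ)) * (1/|2*β*(k:ℝ)+1-α|) := by ring
        _ ≤ (1/(k.factorial : ℝ)) * K :=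
            mul_le_mul h3 (hinvden k) (by positivity) (by positivity)
        _ = K / (k.factorial : ℝ) := by ring
    have hx1 : (l^2 * y^(2*β))^k = l^(2*k) * (y^(2*β))^k := by rw [mul_pow, ← pow_mul]
    rw [Real.norm_eq_abs, abs_mul, abs_of_nonneg (Real.rpow_pos_of_pos hy _).le, habs k,
      hsplit y hy k, hx1]
    calc l^(2*k) / (|l| * (((2*k).factorial : ℕ) : ℝ) * |2*β*(k:ℝ)+1-α|) *
          (y ^ ((1:ℝ)-α) * (y^(2*β))^k)
        = (y ^ ((1:ℝ)-α) * (y^(2*β))^k * l^(2*k) / |l|) *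
            (1/((((2*k).factorial : ℕ) : ℝ) * |2*β*(k:ℝ)+1-α|)) := by ring
      _ ≤ (y ^ ((1:ℝ)-α) * (y^(2*β))^k * l^(2*k) / |l|) * (K / (k.factorial : ℝ)) := by
          apply mul_le_mul_of_nonneg_left hcore
          positivity
      _ = y^((1:ℝ)-α) * K / |l| * (l^(2*k) * (y^(2*β))^k / (k.factorial : ℝ)) := by ring
  -- derivative functions
  set G' : ℕ → ℝ → ℝ := fun k y => b k * (2*β*(k:ℝ)+1-α) * y ^ (2*β*(k:ℝ)-α) with hG'
  have hgderiv : ∀ (k : ℕ) (y : ℝ), y ∈ Set.Ioo (x/2) (2*x) →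
      HasDerivAt (fun z : ℝ => b k * z ^ (2*β*(k:ℝ)+1-α)) (G' k y) y := by
    intro k y hy
    have hy0 : (0:ℝ) < y := lt_trans (by positivity) hy.1
    have h := (Real.hasDerivAt_rpow_const (x := y) (p := 2*β*(k:ℝ)+1-α)
      (Or.inl hy0.ne')).const_mul (b k)
    rw [show 2*β*(k:ℝ)+1-α-1 = 2*β*(k:ℝ)-α from by ring] at h
    refine h.congr_deriv ?_
    rw [hG']
    ring
  -- abs of derivative coefficient
  have habs2 : ∀ k : ℕ, |b k * (2*β*(k:ℝ)+1-α)| =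
      l^(2*k) / (|l| * (((2*k).factorial : ℕ) : ℝ)) := by
    intro k
    rw [hbval k, abs_div, abs_mul, abs_mul, abs_pow, abs_neg, abs_one, one_pow, one_mul,
      Nat.abs_cast, abs_pow, pow_mul, sq_abs, ← pow_mul]
  -- uniform bound on the interval
  have hM : ∀ y : ℝ, y ∈ Set.Ioo (x/2) (2*x) → y ^ (-α) ≤ (x/2)^(-α) + (2*x)^(-α) := by
    intro y hy
    have hy0 : (0:ℝ) < y := lt_trans (by positivity) hy.1
    rcases le_or_gt 0 (-α) with h | h
    · have h1 : y ^ (-α) ≤ (2*x)^(-α) := Real.rpow_le_rpow hy0.le hy.2.le h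
      have h2 : (0:ℝ) ≤ (x/2)^(-α) := (Real.rpow_pos_of_pos (by positivity) _).le
      linarith
    · have h1 : y ^ (-α) ≤ (x/2)^(-α) := Real.rpow_le_rpow_of_nonpos (by positivity) hy.1.le h.le
      have h2 : (0:ℝ) ≤ (2*x)^(-α) := (Real.rpow_pos_of_pos (by positivity) _).le
      linarith
  set u : ℕ → ℝ := fun k => (((x/2)^(-α) + (2*x)^(-α)) / |l|) *
      ((l^2 * (2*x)^(2*β))^k / (k.factorial : ℝ)) with hu_def
  have hu : Summable u := (Real.summable_pow_div_factorial _).mul_left _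
  have hbound : ∀ (k : ℕ) (y : ℝ), y ∈ Set.Ioo (x/2) (2*x) → ‖G' k y‖ ≤ u k := by
    intro k y hy
    have hy0 : (0:ℝ) < y := lt_trans (by positivity) hy.1
    have hfack : (k.factorial : ℝ) ≤ (((2*k).factorial : ℕ) : ℝ) :=
      Nat.cast_le.mpr (Nat.factorial_le (by omega))
    have hfk0 : (0:ℝ) < (k.factorial : ℝ) := by exact_mod_cast Nat.factorial_pos k
    have hf2k0 : (0:ℝ) < (((2*k).factorial : ℕ) : ℝ) := by exact_mod_cast Nat.factorial_pos (2*k)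
    have hl2k : (0:ℝ) ≤ l^(2*k) := by rw [pow_mul]; positivity
    have hM0 : (0:ℝ) ≤ (x/2)^(-α) + (2*x)^(-α) := by
      have := (Real.rpow_pos_of_pos (show (0:ℝ) < x/2 by positivity) (-α)).le
      have := (Real.rpow_pos_of_pos (show (0:ℝ) < 2*x by positivity) (-α)).le
      linarith
    have hZZ : (y^(2*β))^k ≤ ((2*x)^(2*β))^k := by
      apply pow_le_pow_left₀ (Real.rpow_nonneg hy0.le _)
      exact Real.rpow_le_rpow hy0.le hy.2.le hw.le
    have hfle : 1/(((2*k).factorial : ℕ) : ℝ) ≤ 1/(k.factorial : ℝ) :=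
      one_div_le_one_div_of_le hfk0 hfack
    have hx1 : (l^2 * (2*x)^(2*β))^k = l^(2*k) * ((2*x)^(2*β))^k := by rw [mul_pow, ← pow_mul]
    rw [hG']
    simp only
    rw [Real.norm_eq_abs, abs_mul, abs_of_nonneg (Real.rpow_pos_of_pos hy0 _).le, habs2 k,
      hsplit' y hy0 k]
    calc l^(2*k) / (|l| * (((2*k).factorial : ℕ) : ℝ)) * (y^(-α) * (y^(2*β))^k)
        = (l^(2*k)/|l|) * ((1/(((2*k).factorial : ℕ) : ℝ)) * (y^(-α) * (y^(2*β))^k)) := by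
          ring
      _ ≤ (l^(2*k)/|l|) * ((1/(k.factorial : ℝ)) *
            (((x/2)^(-α) + (2*x)^(-α)) * ((2*x)^(2*β))^k)) := by
          apply mul_le_mul_of_nonneg_left _ (by positivity)
          apply mul_le_mul hfle _ (by positivity) (by positivity)
          exact mul_le_mul (hM y hy) hZZ (by positivity) hM0
      _ = u k := by rw [hu_def]; simp only; rw [hx1]; ring
  have hx_mem : x ∈ Set.Ioo (x/2) (2*x) := ⟨by linarith, by linarith⟩
  have key : HasDerivAt (fun z : ℝ => ∑' k : ℕ, b k * z ^ (2*β*(k:ℝ)+1-α))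
      (∑' k : ℕ, G' k x) x :=
    hasDerivAt_tsum_of_isPreconnected hu isOpen_Ioo isPreconnected_Ioo hgderiv hbound
      hx_mem (hsum x hx) hx_mem
  -- the term identity
  have hterm : ∀ (y : ℝ), 0 < y → ∀ n : ℕ,
      1 / 2 * (l * y ^ (2 * β - α + 1)) / (2 * β - α + 1) *
        (poch 1 n * poch d n / (poch (d + 1) n * poch (3/2) n * poch 2 n) *
          (-(l ^ 2 * y ^ (2 * β)) / 4) ^ n / (n.factorial : ℝ)) =
      -(b (n+1) * y ^ (2*β*(((n+1:ℕ)):ℝ)+1-α)) := by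
    intro y hy n
    have hfn : ((n.factorial : ℕ) : ℝ) ≠ 0 := Nat.cast_ne_zero.mpr (Nat.factorial_ne_zero _)
    have hf21 : (((2*n+1).factorial : ℕ) : ℝ) ≠ 0 := Nat.cast_ne_zero.mpr (Nat.factorial_ne_zero _)
    have h4n : ((4:ℝ)^n) ≠ 0 := by positivity
    have hP3 : poch (3/2) n = ((2*n+1).factorial : ℝ) / (4^n * (n.factorial : ℝ)) := by
      rw [← poch_half n]
      field_simp
    have hPdn : poch (d+1) n ≠ 0 := ne_of_gt (poch_pos (by positivity) n)
    have hdenn := hden (n+1)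
    push_cast at hdenn
    have hdd : d / (d + (n:ℝ)) = (2*β-α+1) / (2*β*((n:ℝ)+1)+1-α) := by
      have h1 : d + (n:ℝ) = (2*β*((n:ℝ)+1)+1-α)/(2*β) := by
        rw [hd']; field_simp; ring
      rw [h1, hd']
      field_simp
    have hPdv : poch d n = poch (d+1) n * ((2*β-α+1) / (2*β*((n:ℝ)+1)+1-α)) := by
      rw [← hdd, mul_div_assoc']
      rw [eq_div_iff (hdn n).ne', ← poch_shift d n]
    have hyy : y ^ (2*β*(((n+1:ℕ)):ℝ)+1-α) = y ^ (2*β-α+1) * (y^(2*β))^n := by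
      push_cast
      rw [← Real.rpow_natCast (y^(2*β)) n, ← Real.rpow_mul hy.le, ← Real.rpow_add hy]
      congr 1
      ring
    have hzn : (-(l^2 * y^(2*β)) / 4)^n = (-1)^n * l^(2*n) * (y^(2*β))^n / 4^n := by
      rw [div_pow, neg_pow, mul_pow, ← pow_mul]
      ring
    have hf1 : ((2*(n+1)).factorial : ℕ) = (2*n+2) * (2*n+1).factorial := by
      rw [show 2*(n+1) = (2*n+1)+1 by ring, Nat.factorial_succ]
    have hF1 : (((n+1).factorial : ℕ) : ℝ) = ((n:ℝ)+1) * ((n.factorial : ℕ) : ℝ) := by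
      rw [Nat.factorial_succ]; push_cast; ring
    rw [poch_one, poch_two, hP3, hPdv, hyy, hzn, hbdef]
    simp only
    rw [hf1, hF1]
    push_cast
    have hne1 : ((n.factorial : ℕ) : ℝ) ≠ 0 := hfn
    have hne2 : (((n+1).factorial : ℕ) : ℝ) ≠ 0 := Nat.cast_ne_zero.mpr (Nat.factorial_ne_zero _)
    field_simp
    ring
  -- equality of the two functions on the interval
  have hEq : Set.EqOn
      (fun y : ℝ => (1 / l) * y ^ (1 - α) / (1 - α) -
        (1 / 2) * (l * y ^ (2 * β - α + 1)) / (2 * β - α + 1) *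
          ∑' n : ℕ, poch 1 n * poch d n /
            (poch (d + 1) n * poch (3/2) n * poch 2 n) *
            (-(l ^ 2 * y ^ (2 * β)) / 4) ^ n / (n.factorial : ℝ))
      (fun z : ℝ => ∑' k : ℕ, b k * z ^ (2*β*(k:ℝ)+1-α))
      (Set.Ioo (x/2) (2*x)) := by
    intro y hy
    have hy0 : (0:ℝ) < y := lt_trans (by positivity) hy.1
    simp only
    rw [← tsum_mul_left, tsum_congr (hterm y hy0), tsum_neg,
      Summable.tsum_eq_zero_add (hsum y hy0), sub_neg_eq_add]
    congr 1
    rw [hbdef]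
    norm_num
    ring
  have hmem : Set.Ioo (x/2) (2*x) ∈ nhds x := Ioo_mem_nhds (by linarith) (by linarith)
  have final := key.congr_of_eventuallyEq (Filter.eventuallyEq_of_mem hmem hEq)
  -- value of the derivative
  have hval : (∑' k : ℕ, G' k x) = Real.cos (l * x^β) / (l * x^α) := by
    have h1 : ∀ k : ℕ, G' k x =
        x^(-α)/l * ((-1)^k * (l*x^β)^(2*k) / (((2*k).factorial : ℕ):ℝ)) := by
      intro k
      have h3 : (x^β)^(2*k) = (x^(2*β))^k := by
        rw [← Real.rpow_natCast (x^β) (2*k), ← Real.rpow_mul hx.le,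
          ← Real.rpow_natCast (x^(2*β)) k, ← Real.rpow_mul hx.le]
        congr 1
        push_cast
        ring
      rw [hG']
      simp only
      rw [hbval k, hsplit' x hx k, mul_pow, h3]
      field_simp
    rw [tsum_congr h1, tsum_mul_left, ← Real.cos_eq_tsum, Real.rpow_neg hx.le]
    field_simp
  rw [← hval]
  exact final
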